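/- The functions H₊(α) = max{⟨g, Δ g⟩ : g ∈ σ(α), ‖g‖ = 1} and H₋(α) = min{⟨g, Δ g⟩ : g ∈ σ(α), ‖g‖ = 1} are nondecreasing in α. -/

import Mathlib

open Matrix BigOperators

/-- A simple (loopless, undirected) connected weighted graph on `N` vertices,
presented via its weight function. -/
structure GraphLaplacian (N : ℕ) where
  w : Fin N → Fin N → ℝ
  symm : ∀ i j, w i j = w j i
  nonneg : ∀ i j, 0 ≤ w i j
  loopless : ∀ i, w i i = 0
  connected : ∀ i j : Fin N, Relation.ReflTransGen (fun a b => 0 < w a b) i j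

/-- The graph Laplacian `L = D - A`. -/
def GraphLaplacian.L {N : ℕ} (G : GraphLaplacian N) : Matrix (Fin N) (Fin N) ℝ :=
  fun i j => if i = j then ∑ k, G.w i k else -G.w i j

lemma rayleigh_lb {N : ℕ} {A : Matrix (Fin N) (Fin N) ℝ} (hA : A.IsHermitian) {m : ℝ}
    (hlb : ∀ μ : ℝ, (∃ v : Fin N → ℝ, v ≠ 0 ∧ A *ᵥ v = μ • v) → m ≤ μ)
    {g : Fin N → ℝ} (hg : g ⬝ᵥ g = 1) : m ≤ g ⬝ᵥ (A *ᵥ g) := by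
  classical
  set U : Matrix (Fin N) (Fin N) ℝ := (hA.eigenvectorUnitary : Matrix (Fin N) (Fin N) ℝ) with hU
  set c : Fin N → ℝ := Uᵀ *ᵥ g with hc
  have hstar : star U = Uᵀ := star_eq_conjTranspose U
  have h1 : U * Uᵀ = 1 := by
    rw [← hstar]; exact Matrix.mem_unitaryGroup_iff.mp hA.eigenvectorUnitary.2
  have hme : ∀ i, m ≤ hA.eigenvalues i := fun i =>
    hlb _ ⟨_, fun h => hA.eigenvectorBasis.orthonormal.ne_zero i (WithLp.ofLp_injective 2 (by simp [h])), hA.mulVec_eigenvectorBasis i⟩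
  have hcc : c ⬝ᵥ c = 1 := by
    rw [hc, dotProduct_mulVec, vecMul_transpose, mulVec_mulVec, h1, one_mulVec, hg]
  have hD : (RCLike.ofReal ∘ hA.eigenvalues : Fin N → ℝ) = hA.eigenvalues := by
    ext i; simp
  have hAg : A *ᵥ g = U *ᵥ (diagonal hA.eigenvalues *ᵥ c) := by
    conv_lhs => rw [hA.spectral_theorem, Unitary.conjStarAlgAut_apply]
    rw [← hU, hD, hstar, ← mulVec_mulVec, ← mulVec_mulVec]
  have key : g ⬝ᵥ (A *ᵥ g) = c ⬝ᵥ (diagonal hA.eigenvalues *ᵥ c) := by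
    rw [hAg, dotProduct_mulVec, ← mulVec_transpose]
  rw [key]
  have hform : c ⬝ᵥ (diagonal hA.eigenvalues *ᵥ c) = ∑ i, hA.eigenvalues i * (c i * c i) := by
    simp only [dotProduct, mulVec_diagonal]
    exact Finset.sum_congr rfl fun i _ => by ring
  rw [hform]
  calc m = m * (c ⬝ᵥ c) := by rw [hcc, mul_one]
    _ = ∑ i, m * (c i * c i) := by simp only [dotProduct]; rw [Finset.mul_sum]
    _ ≤ ∑ i, hA.eigenvalues i * (c i * c i) :=
        Finset.sum_le_sum fun i _ => mul_le_mul_of_nonneg_right (hme i) (mul_self_nonneg _)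

/-- `H₊(α)` and `H₋(α)`, the extreme values of `⟨g, Δ g⟩` over unit vectors in
the minimal eigenspace `σ(α)` of `K(α) = L - αΔ`, are nondecreasing in `α`. -/
theorem H_plus_minus_monotone {N : ℕ} (G : GraphLaplacian N)
    (χ : Matrix (Fin N) (Fin N) ℝ) (lam : Fin N → ℝ)
    (hχ : χᵀ * χ = 1)
    (hdiag : χᵀ * G.L * χ = Matrix.diagonal lam)
    (m : ℝ → ℝ)
    (hm : ∀ α : ℝ, IsLeast {μ : ℝ | ∃ v : Fin N → ℝ, v ≠ 0 ∧
      (G.L - α • Matrix.diagonal lam) *ᵥ v = μ • v} (m α)) :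
    Monotone (fun α : ℝ => sSup {x : ℝ | ∃ g : Fin N → ℝ, g ⬝ᵥ g = 1 ∧
        (G.L - α • Matrix.diagonal lam) *ᵥ g = m α • g ∧
        x = g ⬝ᵥ (Matrix.diagonal lam *ᵥ g)}) ∧
    Monotone (fun α : ℝ => sInf {x : ℝ | ∃ g : Fin N → ℝ, g ⬝ᵥ g = 1 ∧
        (G.L - α • Matrix.diagonal lam) *ᵥ g = m α • g ∧
        x = g ⬝ᵥ (Matrix.diagonal lam *ᵥ g)}) := by
  classical
  set Δ : Matrix (Fin N) (Fin N) ℝ := Matrix.diagonal lam with hΔdef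
  set K : ℝ → Matrix (Fin N) (Fin N) ℝ := fun α => G.L - α • Δ with hKdef
  set S : ℝ → Set ℝ := fun α => {x : ℝ | ∃ g : Fin N → ℝ, g ⬝ᵥ g = 1 ∧
        K α *ᵥ g = m α • g ∧ x = g ⬝ᵥ (Δ *ᵥ g)} with hSdef
  -- Hermitian
  have hLsymm : (G.L).IsHermitian := by
    show (G.L)ᴴ = G.L
    ext i j
    simp only [conjTranspose_apply, star_trivial]
    by_cases h : i = j
    · subst h; rfl
    · simp [GraphLaplacian.L, h, Ne.symm h, G.symm]
  have hHerm : ∀ α : ℝ, (K α).IsHermitian := by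
    intro α
    show (K α)ᴴ = K α
    ext i j
    simp only [hKdef, hΔdef, conjTranspose_apply, star_trivial, Matrix.sub_apply, Matrix.smul_apply,
      diagonal_apply, smul_eq_mul]
    have := congrFun (congrFun hLsymm i) j
    simp only [conjTranspose_apply, star_trivial] at this
    by_cases h : i = j
    · subst h; simp
    · simp [h, Ne.symm h, this]
  -- Rayleigh lower bound
  have hray : ∀ (α : ℝ) (g : Fin N → ℝ), g ⬝ᵥ g = 1 → m α ≤ g ⬝ᵥ (K α *ᵥ g) :=
    fun α g hg => rayleigh_lb (hHerm α) (fun μ hμ => (hm α).2 hμ) hg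
  -- eigen equality
  have heig : ∀ (α : ℝ) (g : Fin N → ℝ), g ⬝ᵥ g = 1 → K α *ᵥ g = m α • g →
      g ⬝ᵥ (K α *ᵥ g) = m α := by
    intro α g hg he
    rw [he, dotProduct_smul, hg, smul_eq_mul, mul_one]
  -- shift identity
  have hshift : ∀ (a b : ℝ) (g : Fin N → ℝ),
      g ⬝ᵥ (K b *ᵥ g) = g ⬝ᵥ (K a *ᵥ g) - (b - a) * (g ⬝ᵥ (Δ *ᵥ g)) := by
    intro a b g
    have hK : K b = K a - (b - a) • Δ := by
      simp only [hKdef, sub_smul]; abel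
    rw [hK, sub_mulVec, dotProduct_sub, smul_mulVec, dotProduct_smul, smul_eq_mul]
  -- nonemptiness
  have hne : ∀ α : ℝ, (S α).Nonempty := by
    intro α
    obtain ⟨v, hv0, hvK⟩ := (hm α).1
    have hnn : 0 ≤ v ⬝ᵥ v := by
      simp only [dotProduct]
      exact Finset.sum_nonneg fun i _ => mul_self_nonneg (v i)
    have hpos : 0 < v ⬝ᵥ v := by
      rcases hnn.lt_or_eq with h | h
      · exact h
      · exact absurd ((dotProduct_self_eq_zero).mp h.symm) hv0
    set t : ℝ := (Real.sqrt (v ⬝ᵥ v))⁻¹ with ht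
    set g : Fin N → ℝ := t • v with hgdef
    have hg1 : g ⬝ᵥ g = 1 := by
      rw [hgdef, smul_dotProduct, dotProduct_smul, smul_eq_mul, smul_eq_mul, ht,
        ← mul_assoc, ← mul_inv, Real.mul_self_sqrt hpos.le, inv_mul_cancel₀ hpos.ne']
    have hgK : K α *ᵥ g = m α • g := by
      rw [hgdef, mulVec_smul, hvK, smul_comm]
    exact ⟨g ⬝ᵥ (Δ *ᵥ g), g, hg1, hgK, rfl⟩
  -- bounds on elements
  have hbound : ∀ (α : ℝ) (x : ℝ), x ∈ S α → |x| ≤ ∑ i, |lam i| := by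
    intro α x hx
    obtain ⟨g, hg, -, hxval⟩ := hx
    have hsq : ∀ i, g i * g i ≤ 1 := by
      intro i
      have := Finset.single_le_sum (f := fun j => g j * g j)
        (fun j _ => mul_self_nonneg (g j)) (Finset.mem_univ i)
      simpa [dotProduct] using this.trans_eq hg
    have hxval' : x = ∑ i, lam i * (g i * g i) := by
      rw [hxval]
      simp only [hΔdef, dotProduct, mulVec_diagonal]
      exact Finset.sum_congr rfl fun i _ => by ring
    rw [hxval']
    refine (Finset.abs_sum_le_sum_abs _ _).trans (Finset.sum_le_sum fun i _ => ?_)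
    rw [abs_mul]
    calc |lam i| * |g i * g i| ≤ |lam i| * 1 := by
          refine mul_le_mul_of_nonneg_left ?_ (abs_nonneg _)
          rw [abs_of_nonneg (mul_self_nonneg (g i))]; exact hsq i
      _ = |lam i| := mul_one _
  have hbddA : ∀ α : ℝ, BddAbove (S α) :=
    fun α => ⟨∑ i, |lam i|, fun x hx => (le_abs_self x).trans (hbound α x hx)⟩
  have hbddB : ∀ α : ℝ, BddBelow (S α) :=
    fun α => ⟨-∑ i, |lam i|, fun x hx => (abs_le.mp (hbound α x hx)).1⟩
  -- key comparison
  have hkey : ∀ a b : ℝ, a < b → ∀ x ∈ S a, ∀ y ∈ S b, x ≤ y := by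
    intro a b hab x hx y hy
    obtain ⟨g₁, hg₁, he₁, hx₁⟩ := hx
    obtain ⟨g₂, hg₂, he₂, hy₂⟩ := hy
    have h1 : m b ≤ m a - (b - a) * x := by
      have := hray b g₁ hg₁
      rwa [hshift a b g₁, heig a g₁ hg₁ he₁, ← hx₁] at this
    have h2 : m a ≤ m b + (b - a) * y := by
      have := hray a g₂ hg₂
      rw [hshift b a g₂, heig b g₂ hg₂ he₂, ← hy₂] at this
      linarith
    nlinarith [sub_pos.mpr hab]
  constructor
  · intro a b hab
    rcases hab.eq_or_lt with rfl | hab'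
    · exact le_refl _
    · simp only
      refine csSup_le (hne a) fun x hx => ?_
      obtain ⟨y₀, hy₀⟩ := hne b
      exact (hkey a b hab' x hx y₀ hy₀).trans (le_csSup (hbddA b) hy₀)
  · intro a b hab
    rcases hab.eq_or_lt with rfl | hab'
    · exact le_refl _
    · simp only
      refine le_csInf (hne b) fun y hy => ?_
      obtain ⟨x₀, hx₀⟩ := hne a
      exact (csInf_le (hbddB a) hx₀).trans (hkey a b hab' x₀ hx₀ y hy)
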